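/- If H : X' → X is a fibrewise map admitting a right fibrewise homotopy inverse (H' : X → X' with H∘H' ≃_B id_X), then D_B(f_1∘H,...,f_r∘H) = D_B(f_1,...,f_r) for fibrewise maps f_1,...,f_r : X → Y over B. -/

import Mathlib

open Set

/-- Two continuous maps are fibrewise homotopic over `B`: there is a homotopy
whose every time-slice commutes with the projections to `B`. -/
def FibHomotopic {B X Y : Type*} [TopologicalSpace B] [TopologicalSpace X] [TopologicalSpace Y]
    (pX : X → B) (pY : Y → B) (f g : C(X, Y)) : Prop :=
  ∃ H : f.Homotopy g, ∀ (x : X) (t : unitInterval), pY (H (t, x)) = pX x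

/-- Sequential parametrized homotopic distance of a family of fibrewise maps:
the least `n` such that `X` admits an open cover by `n + 1` open sets on each of
which all the maps are pairwise fibrewise homotopic (`∞` if none exists). -/
noncomputable def fibDist {B X Y ι : Type*} [TopologicalSpace B] [TopologicalSpace X]
    [TopologicalSpace Y] (pX : X → B) (pY : Y → B) (f : ι → C(X, Y)) : ℕ∞ :=
  sInf {n : ℕ∞ | ∃ k : ℕ, (k : ℕ∞) = n ∧ ∃ U : Fin (k + 1) → Set X,
    (∀ i, IsOpen (U i)) ∧ (⋃ i, U i) = Set.univ ∧
    ∀ i s t, FibHomotopic (fun x : U i => pX (x : X)) pY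
      ((f s).restrict (U i)) ((f t).restrict (U i))}

lemma FibHomotopic.symm' {B X Y : Type*} [TopologicalSpace B] [TopologicalSpace X]
    [TopologicalSpace Y] {pX : X → B} {pY : Y → B} {f g : C(X, Y)}
    (h : FibHomotopic pX pY f g) : FibHomotopic pX pY g f := by
  obtain ⟨K, hK⟩ := h
  exact ⟨K.symm, fun x t => hK x _⟩

lemma FibHomotopic.trans' {B X Y : Type*} [TopologicalSpace B] [TopologicalSpace X]
    [TopologicalSpace Y] {pX : X → B} {pY : Y → B} {f g h : C(X, Y)}
    (h1 : FibHomotopic pX pY f g) (h2 : FibHomotopic pX pY g h) : FibHomotopic pX pY f h := by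
  obtain ⟨K, hK⟩ := h1
  obtain ⟨L, hL⟩ := h2
  refine ⟨K.trans L, fun x t => ?_⟩
  rw [ContinuousMap.Homotopy.trans_apply]
  split_ifs
  · exact hK x _
  · exact hL x _

lemma FibHomotopic.comp_right {B X Z Y : Type*} [TopologicalSpace B] [TopologicalSpace X]
    [TopologicalSpace Z] [TopologicalSpace Y] {pX : X → B} {pZ : Z → B} {pY : Y → B}
    {f g : C(X, Y)} (h : FibHomotopic pX pY f g) (φ : C(Z, X)) (hφ : ∀ z, pX (φ z) = pZ z) :
    FibHomotopic pZ pY (f.comp φ) (g.comp φ) := by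
  obtain ⟨K, hK⟩ := h
  refine ⟨K.compContinuousMap φ, fun z t => ?_⟩
  simpa using (hK (φ z) t).trans (hφ z)

/-- Precomposition with any fibrewise map does not increase `fibDist`. -/
lemma fibDist_comp_le {B X X' Y ι : Type*} [TopologicalSpace B] [TopologicalSpace X]
    [TopologicalSpace X'] [TopologicalSpace Y] (pX : X → B) (pX' : X' → B) (pY : Y → B)
    (f : ι → C(X, Y)) (H : C(X', X)) (hH : ∀ x, pX (H x) = pX' x) :
    fibDist pX' pY (fun i => (f i).comp H) ≤ fibDist pX pY f := by
  apply sInf_le_sInf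
  rintro n ⟨k, hk, U, hUopen, hUcov, hUhom⟩
  refine ⟨k, hk, fun i => H ⁻¹' (U i), fun i => (hUopen i).preimage H.continuous, ?_, ?_⟩
  · apply Set.eq_univ_of_forall
    intro x
    have : H x ∈ ⋃ i, U i := hUcov ▸ Set.mem_univ _
    obtain ⟨i, hi⟩ := Set.mem_iUnion.1 this
    exact Set.mem_iUnion.2 ⟨i, hi⟩
  · intro i s t
    set V : Set X' := H ⁻¹' (U i)
    have φcont : Continuous (fun v : V => (⟨H v, v.2⟩ : U i)) :=
      Continuous.subtype_mk (H.continuous.comp continuous_subtype_val) _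
    have := (hUhom i s t).comp_right ⟨fun v : V => (⟨H v, v.2⟩ : U i), φcont⟩
      (fun v => hH v)
    convert this using 2 <;> ext v <;> rfl

/-- If each `g i` is fibrewise homotopic to `f i`, then `fibDist f ≤ fibDist g`. -/
lemma fibDist_le_of_fibHomotopic {B X Y ι : Type*} [TopologicalSpace B] [TopologicalSpace X]
    [TopologicalSpace Y] (pX : X → B) (pY : Y → B) (f g : ι → C(X, Y))
    (hfg : ∀ i, FibHomotopic pX pY (f i) (g i)) :
    fibDist pX pY f ≤ fibDist pX pY g := by
  apply sInf_le_sInf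
  rintro n ⟨k, hk, U, hUopen, hUcov, hUhom⟩
  refine ⟨k, hk, U, hUopen, hUcov, fun i s t => ?_⟩
  have incl : C((U i : Set X), X) := ⟨Subtype.val, continuous_subtype_val⟩
  have hres : ∀ j, FibHomotopic (fun x : U i => pX (x : X)) pY
      ((f j).restrict (U i)) ((g j).restrict (U i)) := by
    intro j
    have := (hfg j).comp_right (⟨Subtype.val, continuous_subtype_val⟩ : C((U i : Set X), X))
      (fun v => rfl)
    exact this
  exact ((hres s).trans' (hUhom i s t)).trans' (hres t).symm'

/-- Precomposition with a fibrewise map admitting a right fibrewise homotopy inverse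
preserves the sequential parametrized homotopic distance. -/
theorem stmt11 {B X X' Y : Type*} [TopologicalSpace B] [TopologicalSpace X] [TopologicalSpace X']
    [TopologicalSpace Y] (pX : X → B) (pX' : X' → B) (pY : Y → B)
    (hpX : Continuous pX) (hpX' : Continuous pX') (hpY : Continuous pY)
    (r : ℕ) (f : Fin r → C(X, Y)) (hf : ∀ i x, pY (f i x) = pX x)
    (H : C(X', X)) (hH : ∀ x, pX (H x) = pX' x)
    (H' : C(X, X')) (hH' : ∀ x, pX' (H' x) = pX x)
    (hinv : FibHomotopic pX pX (H.comp H') (ContinuousMap.id X)) :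
    fibDist pX' pY (fun i => (f i).comp H) = fibDist pX pY f := by
  have le1 : fibDist pX' pY (fun i => (f i).comp H) ≤ fibDist pX pY f :=
    fibDist_comp_le pX pX' pY f H hH
  have le2 : fibDist pX pY (fun i => ((f i).comp H).comp H') ≤
      fibDist pX' pY (fun i => (f i).comp H) :=
    fibDist_comp_le pX' pX pY (fun i => (f i).comp H) H' hH'
  have le3 : fibDist pX pY f ≤ fibDist pX pY (fun i => ((f i).comp H).comp H') := by
    apply fibDist_le_of_fibHomotopic
    intro i
    obtain ⟨K, hK⟩ := hinv
    refine FibHomotopic.symm' ⟨((ContinuousMap.Homotopy.refl (f i)).comp K).cast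
      (by ext x; rfl) (by ext x; rfl), fun x t => ?_⟩
    have : (((ContinuousMap.Homotopy.refl (f i)).comp K).cast
        (show (f i).comp (H.comp H') = ((f i).comp H).comp H' by ext x; rfl)
        (show (f i).comp (ContinuousMap.id X) = f i by ext x; rfl)) (t, x)
        = f i (K (t, x)) := rfl
    rw [this, hf i, hK x t]
  exact le_antisymm le1 (le3.trans le2)
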